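/- arXiv:2001.00609 — 4 statements merged into one kernel-verified Lean document; each statement's English description precedes it below -/
import Mathlib

section
/- The relation ⊑* between pregeometries is transitive: if F ⊑* H and H ⊑* G, then F ⊑* G. -/
open scoped Classical

/-- A combinatorial pregeometry (matroid) on the ground type `α`, given by a
dimension (rank) function on finite subsets. -/
structure Pregeometry (α : Type*) [DecidableEq α] where
  dim : Finset α → ℕ
  dim_empty : dim ∅ = 0
  dim_le_insert : ∀ (A : Finset α) (x : α), dim A ≤ dim (insert x A)
  insert_le_dim : ∀ (A : Finset α) (x : α), dim (insert x A) ≤ dim A + 1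
  submodular : ∀ A B : Finset α, dim (A ∪ B) + dim (A ∩ B) ≤ dim A + dim B

namespace Pregeometry

variable {α : Type*} [DecidableEq α] (G : Pregeometry α)

/-- Closure of an arbitrary subset. -/
def cl (Y : Set α) : Set α :=
  {x | ∃ A : Finset α, ↑A ⊆ Y ∧ G.dim (insert x A) = G.dim A}

/-- `Y` is closed (in the ambient pregeometry `G`). -/
def IsClosed (Y : Set α) : Prop := G.cl Y = Y

/-- `X` is a closed set of the subpregeometry of `G` induced on `P`
(whose closure operator is `Y ↦ cl Y ∩ P`). -/
def IsClosedIn (P X : Set α) : Prop := X ⊆ P ∧ G.cl X ∩ P = X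

/-- Dimension of an arbitrary subset, with value `⊤` when infinite-dimensional. -/
noncomputable def edim (Y : Set α) : ℕ∞ :=
  ⨆ (A : Finset α) (_ : ↑A ⊆ Y), (G.dim A : ℕ∞)

/-- The (natural number) dimension of a finite-dimensional subset. -/
noncomputable def sdim (Y : Set α) : ℕ := (G.edim Y).toNat

/-- The alternating inclusion–exclusion sum
`Δ_G(Σ) = Σ_{∅ ≠ S ⊆ Σ} (-1)^{|S|+1} d(⋂ S)` of a finite collection of sets. -/
noncomputable def flatSum (Sig : Finset (Set α)) : ℤ :=
  ∑ S ∈ Sig.powerset.filter (· ≠ ∅),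
    (-1) ^ (S.card + 1) * (G.sdim (⋂₀ ↑S) : ℤ)

/-- `P ⊑* Q`: for the subpregeometries induced on `P ⊆ Q`, the dimension of the
intersection of two closed sets of `P` equals the dimension of the intersection
of their closures in `Q` (the closure of `X` in `Q` being `cl X ∩ Q`). -/
def SqStar (P Q : Set α) : Prop := P ⊆ Q ∧
  ∀ X₁ X₂ : Set α, G.IsClosedIn P X₁ → G.IsClosedIn P X₂ →
    G.edim (X₁ ∩ X₂) = G.edim (G.cl X₁ ∩ G.cl X₂ ∩ Q)

/-- `P ⊑ Q`: `P` is strongly embedded in `Q`: for every finite collection `Σ` of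
finite-dimensional closed sets of `Q`, `Δ_P(Σ_P) ≤ Δ_Q(Σ)` where
`Σ_P = {E ∩ P : E ∈ Σ}`. -/
def Sq (P Q : Set α) : Prop := P ⊆ Q ∧
  ∀ Sig : Finset (Set α), (∀ E ∈ Sig, G.IsClosedIn Q E) →
    (∀ E ∈ Sig, G.edim E ≠ ⊤) →
    G.flatSum (Sig.image (· ∩ P)) ≤ G.flatSum Sig

/-- The subpregeometry induced on `P` is flat: every finite collection of
finite-dimensional closed sets satisfies `d(⋃ Σ) ≤ Δ(Σ)`. -/
def FlatIn (P : Set α) : Prop :=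
  ∀ Sig : Finset (Set α), (∀ E ∈ Sig, G.IsClosedIn P E) →
    (∀ E ∈ Sig, G.edim E ≠ ⊤) →
    (G.sdim (⋃₀ ↑Sig) : ℤ) ≤ G.flatSum Sig

/-- The α-function of the subpregeometry of `G` induced on `P`:
`α(X) = |X| − d(X) − Σ_{Y ⊊ X closed} α(Y)`. -/
noncomputable def alphaIn (P : Set α) (X : Finset α) : ℤ :=
  (X.card : ℤ) - (G.dim X : ℤ) -
    ∑ Y ∈ (X.powerset.filter fun Y => Y ≠ X ∧ G.IsClosedIn P ↑Y).attach,
      alphaIn P Y.1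
termination_by X.card
decreasing_by
  have h := Y.2
  simp only [Finset.mem_filter, Finset.mem_powerset] at h
  exact Finset.card_lt_card (lt_of_le_of_ne h.1 h.2.1)

end Pregeometry

/-- A hypergraph on the vertex type `α`: a set of nonempty finite edges. -/
structure SetHypergraph (α : Type*) where
  edges : Set (Finset α)
  nonempty_edges : ∀ e ∈ edges, e ≠ ∅

namespace SetHypergraph

variable {α : Type*} [DecidableEq α] (A : SetHypergraph α)

/-- The set of edges contained in a set of vertices. -/
def edgesIn (P : Set α) : Set (Finset α) := {e | e ∈ A.edges ∧ ↑e ⊆ P}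

/-- The predimension `δ(P) = |P| − |R[P]|` of a finite set of vertices. -/
noncomputable def delta (P : Finset α) : ℤ :=
  (P.card : ℤ) - (A.edgesIn ↑P).ncard

/-- The relative predimension `δ(L/P) = |L∖P| − |R[L∪P]∖R[P]|`. -/
noncomputable def deltaRel (L : Finset α) (P : Set α) : ℤ :=
  ((↑L \ P : Set α).ncard : ℤ) -
    ({e | e ∈ A.edges ∧ ↑e ⊆ ↑L ∪ P ∧ ¬ ↑e ⊆ P} : Set (Finset α)).ncard

/-- `P` is self-sufficient in `A`: `δ(X/P) ≥ 0` for every finite `X`, stated so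
as to be meaningful even when infinitely many edges are involved. -/
def SelfSuff (P : Set α) : Prop :=
  ∀ X : Finset α, ∀ Es : Finset (Finset α),
    (∀ e ∈ Es, e ∈ A.edges ∧ ↑e ⊆ ↑X ∪ P ∧ ¬ ↑e ⊆ P) →
    (Es.card : ℤ) ≤ ((↑X \ P : Set α).ncard : ℤ)

/-- The dimension function associated to a hypergraph:
`d(X) = inf {δ(B) : X ⊆ B finite}`. -/
noncomputable def hdim (X : Finset α) : ℤ :=
  sInf {d : ℤ | ∃ B : Finset α, X ⊆ B ∧ d = A.delta B}

/-- The induced subhypergraph on a set `P` of vertices (keeping `α` as the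
ambient vertex type). -/
def restrict (P : Set α) : SetHypergraph α :=
  ⟨{e | e ∈ A.edges ∧ ↑e ⊆ P}, fun e he => A.nonempty_edges e he.1⟩

/-- A pregeometry `G` is represented by the hypergraph `A` if the associated
dimension function of `A` is the dimension function of `G`. -/
def Represents (G : Pregeometry α) : Prop :=
  ∀ X : Finset α, (G.dim X : ℤ) = A.hdim X

end SetHypergraph

namespace Pregeometry

variable {α : Type*} [DecidableEq α] (G : Pregeometry α)

lemma dim_mono' {A B : Finset α} (h : A ⊆ B) : G.dim A ≤ G.dim B := by
  classical
  have key : ∀ C : Finset α, G.dim A ≤ G.dim (A ∪ C) := by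
    intro C
    induction C using Finset.induction_on with
    | empty => simp
    | insert x C hx ih =>
      calc G.dim A ≤ G.dim (A ∪ C) := ih
        _ ≤ G.dim (insert x (A ∪ C)) := G.dim_le_insert _ _
        _ = G.dim (A ∪ insert x C) := by rw [Finset.union_insert]
  have := key B
  rwa [Finset.union_eq_right.mpr h] at this

lemma insert_dim_eq' {A B : Finset α} (x : α) (hAB : A ⊆ B)
    (h : G.dim (insert x A) = G.dim A) : G.dim (insert x B) = G.dim B := by
  have hsub := G.submodular (insert x A) B
  have h1 : insert x A ∪ B = insert x B := by
    rw [Finset.insert_union, Finset.union_eq_right.mpr hAB]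
  have h2 : A ⊆ insert x A ∩ B := Finset.subset_inter (Finset.subset_insert x A) hAB
  have h3 := G.dim_mono' h2
  rw [h1, h] at hsub
  have h4 := G.dim_le_insert B x
  omega

lemma subset_cl' (X : Set α) : X ⊆ G.cl X := by
  intro x hx
  exact ⟨{x}, by simpa using hx, by simp⟩

lemma cl_mono' {X Y : Set α} (h : X ⊆ Y) : G.cl X ⊆ G.cl Y := by
  rintro x ⟨A, hA, hd⟩
  exact ⟨A, hA.trans h, hd⟩

lemma cl_idem' (X : Set α) : G.cl (G.cl X) = G.cl X := by
  classical
  apply Set.Subset.antisymm _ (G.subset_cl' _)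
  rintro x ⟨B, hB, hd⟩
  have hch : ∀ b ∈ B, ∃ A : Finset α, ↑A ⊆ X ∧ G.dim (insert b A) = G.dim A :=
    fun b hb => hB hb
  choose! f hf1 hf2 using hch
  set C := B.biUnion f with hC
  have hCX : ↑C ⊆ X := by
    intro a ha
    simp only [hC, Finset.coe_biUnion, Set.mem_iUnion, Finset.mem_coe] at ha
    obtain ⟨b, hb, hab⟩ := ha
    exact hf1 b hb hab
  have key : ∀ B' : Finset α, B' ⊆ B → G.dim (B' ∪ C) = G.dim C := by
    intro B'
    induction B' using Finset.induction_on with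
    | empty => simp
    | insert b B' hx ih =>
      intro hsub
      have hb : b ∈ B := hsub (Finset.mem_insert_self b B')
      have hfb : f b ⊆ B' ∪ C := fun a ha =>
        Finset.mem_union_right _ (Finset.mem_biUnion.mpr ⟨b, hb, ha⟩)
      have hdb := G.insert_dim_eq' b hfb (hf2 b hb)
      rw [Finset.insert_union, hdb, ih (fun a ha => hsub (Finset.mem_insert_of_mem ha))]
  have h1 : G.dim (B ∪ C) = G.dim C := key B (Finset.Subset.refl B)
  have h2 : G.dim (insert x (B ∪ C)) = G.dim (B ∪ C) :=
    G.insert_dim_eq' x Finset.subset_union_left hd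
  have h3 : G.dim (insert x C) ≤ G.dim C := by
    have hCBC : C ⊆ B ∪ C := fun a ha => Finset.mem_union_right _ ha
    have := G.dim_mono' (Finset.insert_subset_insert x hCBC)
    omega
  exact ⟨C, hCX, le_antisymm h3 (G.dim_le_insert C x)⟩

end Pregeometry

/-- the relation `⊑*` is transitive. -/
theorem sqStar_trans {α : Type*} [DecidableEq α] (G : Pregeometry α)
    (F H Q : Set α) (hFH : G.SqStar F H) (hHQ : G.SqStar H Q) :
    G.SqStar F Q := by
  obtain ⟨hFH1, hFH2⟩ := hFH
  obtain ⟨hHQ1, hHQ2⟩ := hHQ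
  refine ⟨hFH1.trans hHQ1, fun X₁ X₂ h₁ h₂ => ?_⟩
  have clY : ∀ X : Set α, G.IsClosedIn F X → G.cl (G.cl X ∩ H) = G.cl X := by
    intro X hX
    apply Set.Subset.antisymm
    · calc G.cl (G.cl X ∩ H) ⊆ G.cl (G.cl X) := G.cl_mono' Set.inter_subset_left
        _ = G.cl X := G.cl_idem' X
    · apply G.cl_mono'
      intro a ha
      exact ⟨G.subset_cl' X ha, hFH1 (hX.1 ha)⟩
  have hY : ∀ X : Set α, G.IsClosedIn F X → G.IsClosedIn H (G.cl X ∩ H) := by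
    intro X hX
    exact ⟨Set.inter_subset_right, by rw [clY X hX]⟩
  have e1 := hFH2 X₁ X₂ h₁ h₂
  have e2 := hHQ2 _ _ (hY X₁ h₁) (hY X₂ h₂)
  rw [clY X₁ h₁, clY X₂ h₂] at e2
  rw [e1, ← e2]
  congr 1
  ext a
  simp only [Set.mem_inter_iff]
  tauto
end

section
/- In a hypergraph A = (M,R) with associated dimension function bounded below by 0, if X and Y are both self-sufficient in A, then X ∩ Y is self-sufficient in A. -/
open scoped Classical

/-- A hypergraph on the vertex type `α`: a set of nonempty finite edges. -/
structure Hypergraph' (α : Type*) where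
  edges : Set (Finset α)
  nonempty_edges : ∀ e ∈ edges, e ≠ ∅

namespace Hypergraph'

variable {α : Type*} [DecidableEq α] (A : Hypergraph' α)

/-- The set of edges contained in a set of vertices. -/
def edgesIn (P : Set α) : Set (Finset α) := {e | e ∈ A.edges ∧ ↑e ⊆ P}

/-- The predimension `δ(P) = |P| − |R[P]|` of a finite set of vertices. -/
noncomputable def delta (P : Finset α) : ℤ :=
  (P.card : ℤ) - (A.edgesIn ↑P).ncard

/-- The relative predimension `δ(L/P) = |L∖P| − |R[L∪P]∖R[P]|`. -/
noncomputable def deltaRel (L : Finset α) (P : Set α) : ℤ :=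
  ((↑L \ P : Set α).ncard : ℤ) -
    ({e | e ∈ A.edges ∧ ↑e ⊆ ↑L ∪ P ∧ ¬ ↑e ⊆ P} : Set (Finset α)).ncard

/-- `P` is self-sufficient in `A`: `δ(X/P) ≥ 0` for every finite `X`, stated so
as to be meaningful even when infinitely many edges are involved. -/
def SelfSuff (P : Set α) : Prop :=
  ∀ X : Finset α, ∀ Es : Finset (Finset α),
    (∀ e ∈ Es, e ∈ A.edges ∧ ↑e ⊆ ↑X ∪ P ∧ ¬ ↑e ⊆ P) →
    (Es.card : ℤ) ≤ ((↑X \ P : Set α).ncard : ℤ)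

/-- The dimension function associated to a hypergraph:
`d(X) = inf {δ(B) : X ⊆ B finite}`. -/
noncomputable def hdim (X : Finset α) : ℤ :=
  sInf {d : ℤ | ∃ B : Finset α, X ⊆ B ∧ d = A.delta B}

/-- The induced subhypergraph on a set `P` of vertices (keeping `α` as the
ambient vertex type). -/
def restrict (P : Set α) : Hypergraph' α :=
  ⟨{e | e ∈ A.edges ∧ ↑e ⊆ P}, fun e he => A.nonempty_edges e he.1⟩

/-- A pregeometry `G` is represented by the hypergraph `A` if the associated
dimension function of `A` is the dimension function of `G`. -/
def Represents (G : Pregeometry α) : Prop :=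
  ∀ X : Finset α, (G.dim X : ℤ) = A.hdim X

end Hypergraph'
/-- the intersection of two self-sufficient sets is
self-sufficient (in a hypergraph whose dimension function is bounded below
by `0`, i.e. `∅` is self-sufficient). -/
theorem selfSuff_inter {α : Type*} [DecidableEq α] (A : Hypergraph' α)
    (hA : A.SelfSuff ∅) (X Y : Set α)
    (hX : A.SelfSuff X) (hY : A.SelfSuff Y) : A.SelfSuff (X ∩ Y) := by
  classical
  intro Z Es hEs
  set Es1 := Es.filter (fun e : Finset α => ¬ (↑e : Set α) ⊆ X) with hEs1
  set Es2 := Es.filter (fun e : Finset α => (↑e : Set α) ⊆ X) with hEs2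
  set W := Z.filter (fun a => a ∈ X) with hWdef
  have hW : (↑W : Set α) = ↑Z ∩ X := by ext x; simp [hWdef]
  have h1 : (Es1.card : ℤ) ≤ ((↑Z \ X : Set α).ncard : ℤ) := by
    apply hX Z
    intro e he
    rw [hEs1, Finset.mem_filter] at he
    obtain ⟨heE, hnot⟩ := he
    obtain ⟨ha, hb, _⟩ := hEs e heE
    refine ⟨ha, ?_, hnot⟩
    intro x hx
    rcases hb hx with h | h
    · exact Or.inl h
    · exact Or.inr h.1
  have h2 : (Es2.card : ℤ) ≤ ((↑W \ Y : Set α).ncard : ℤ) := by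
    apply hY W
    intro e he
    rw [hEs2, Finset.mem_filter] at he
    obtain ⟨heE, hsub⟩ := he
    obtain ⟨ha, hb, hc⟩ := hEs e heE
    refine ⟨ha, ?_, ?_⟩
    · rw [hW]
      intro x hx
      rcases hb hx with h | h
      · exact Or.inl ⟨h, hsub hx⟩
      · exact Or.inr h.2
    · intro hY'
      exact hc (fun x hx => ⟨hsub hx, hY' hx⟩)
  have hcard : Es.card = Es2.card + Es1.card := by
    rw [hEs1, hEs2]
    exact (Finset.card_filter_add_card_filter_not _).symm
  have hset : (↑Z \ (X ∩ Y) : Set α) = (↑Z \ X) ∪ ((↑Z ∩ X) \ Y) := by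
    ext x
    simp only [Set.mem_diff, Set.mem_inter_iff, Set.mem_union]
    tauto
  have hdisj : Disjoint (↑Z \ X : Set α) ((↑Z ∩ X) \ Y) := by
    rw [Set.disjoint_left]
    rintro x ⟨_, hx⟩ ⟨⟨_, hx'⟩, _⟩
    exact hx hx'
  have hfin1 : (↑Z \ X : Set α).Finite := Z.finite_toSet.diff (t := X)
  have hfin2 : ((↑Z ∩ X : Set α) \ Y).Finite := (Z.finite_toSet.inter_of_left X).diff (t := Y)
  have hncard : (↑Z \ (X ∩ Y) : Set α).ncard
      = (↑Z \ X : Set α).ncard + ((↑Z ∩ X) \ Y : Set α).ncard := by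
    rw [hset]
    exact Set.ncard_union_eq hdisj hfin1 hfin2
  rw [hW] at h2
  rw [hcard, hncard]
  push_cast
  linarith
end

section
/- Let A = (M,R) be a hypergraph with ∅ self-sufficient in A, and let P ≤ A be self-sufficient. If Y₁,...,Y_n ⊆ M satisfy δ_A(Y_i / Y_i ∩ P) ≤ 0 for each i, then P ∪ Y₁ ∪ ... ∪ Y_n is self-sufficient in A and the Y_i are freely joined over P, i.e., R[P ∪ ∪_i Y_i] = R[P] ∪ ∪_i R[Y_i]. -/
open scoped Classical

section Aux

variable {α : Type*} [DecidableEq α] (A : Hypergraph' α)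

/-- If `P` is self-sufficient, then for any finite `X` the set of edges
inside `X ∪ P` not inside `P` is finite of size at most `|X \ P|`. -/
lemma aux_finite_bound {P : Set α} (hP : A.SelfSuff P) (X : Finset α) :
    ({e | e ∈ A.edges ∧ ↑e ⊆ (↑X : Set α) ∪ P ∧ ¬ ↑e ⊆ P} : Set (Finset α)).Finite ∧
    ({e | e ∈ A.edges ∧ ↑e ⊆ (↑X : Set α) ∪ P ∧ ¬ ↑e ⊆ P} : Set (Finset α)).ncard ≤
      (↑X \ P : Set α).ncard := by
  set S : Set (Finset α) := {e | e ∈ A.edges ∧ ↑e ⊆ (↑X : Set α) ∪ P ∧ ¬ ↑e ⊆ P} with hS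
  set m : ℕ := (↑X \ P : Set α).ncard with hm
  have hbound : ∀ Es : Finset (Finset α), ↑Es ⊆ S → Es.card ≤ m := by
    intro Es hEs
    have := hP X Es (fun e he => hEs he)
    exact_mod_cast this
  have hfin : S.Finite := by
    by_contra h
    obtain ⟨t, ht, htc⟩ := (show S.Infinite from h).exists_subset_card_eq (m + 1)
    have := hbound t ht
    omega
  refine ⟨hfin, ?_⟩
  have := hbound hfin.toFinset (by simp)
  rwa [Set.ncard_eq_toFinset_card _ hfin]

/-- Single-step lemma: if `P ≤ A` and `|Y \ P| ≤ #{e ⊆ Y, ¬ e ⊆ P}`, then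
`P ∪ Y ≤ A` and edges split. -/
lemma aux_step {P : Set α} (hP : A.SelfSuff P) (Y : Finset α)
    (hY : ((↑Y \ P : Set α).ncard : ℤ) ≤
      (({e | e ∈ A.edges ∧ ↑e ⊆ (↑Y : Set α) ∧ ¬ ↑e ⊆ P} : Set (Finset α)).ncard : ℤ)) :
    A.SelfSuff (P ∪ ↑Y) ∧ A.edgesIn (P ∪ ↑Y) = A.edgesIn P ∪ A.edgesIn ↑Y := by
  set S1 : Set (Finset α) := {e | e ∈ A.edges ∧ ↑e ⊆ (↑Y : Set α) ∪ P ∧ ¬ ↑e ⊆ P} with hS1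
  set S2 : Set (Finset α) := {e | e ∈ A.edges ∧ ↑e ⊆ (↑Y : Set α) ∧ ¬ ↑e ⊆ P} with hS2
  obtain ⟨hS1fin, hS1card⟩ := aux_finite_bound A hP Y
  have hS2fin : S2.Finite := by
    refine Set.Finite.subset (Y.powerset.finite_toSet) ?_
    intro e he
    simp only [Finset.coe_powerset, Set.mem_preimage, Set.mem_powerset_iff]
    exact he.2.1
  have hsub : S2 ⊆ S1 := fun e he => ⟨he.1, he.2.1.trans Set.subset_union_left, he.2.2⟩
  have hle : S1.ncard ≤ S2.ncard := by
    have : ((↑Y \ P : Set α).ncard : ℤ) ≤ (S2.ncard : ℤ) := hY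
    have h2 : (S1.ncard : ℤ) ≤ ((↑Y \ P : Set α).ncard : ℤ) := by exact_mod_cast hS1card
    exact_mod_cast h2.trans this
  have heq : S2 = S1 := Set.eq_of_subset_of_ncard_le hsub hle hS1fin
  have key : ∀ e, e ∈ A.edges → ↑e ⊆ ↑Y ∪ P → ¬ ↑e ⊆ P → (↑e : Set α) ⊆ ↑Y := by
    intro e h1 h2 h3
    have : e ∈ S1 := ⟨h1, h2, h3⟩
    rw [← heq] at this
    exact this.2.1
  constructor
  · -- self-sufficiency of P ∪ Y
    intro X Es hEs
    set F2 : Finset (Finset α) := hS2fin.toFinset with hF2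
    have hdisj : Disjoint Es F2 := by
      rw [Finset.disjoint_left]
      intro e heEs heF2
      have h1 := hEs e heEs
      have h2 : e ∈ S2 := by rwa [hF2, Set.Finite.mem_toFinset] at heF2
      exact h1.2.2 (h2.2.1.trans Set.subset_union_right)
    have happ := hP (X ∪ Y) (Es ∪ F2) ?_
    · have hcard : (Es ∪ F2).card = Es.card + F2.card := Finset.card_union_of_disjoint hdisj
      have hF2card : F2.card = S2.ncard := (Set.ncard_eq_toFinset_card _ hS2fin).symm
      have hsplit : ((↑(X ∪ Y) \ P : Set α)).ncard ≤
          ((↑X \ (P ∪ ↑Y) : Set α)).ncard + ((↑Y \ P : Set α)).ncard := by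
        have hss : ((↑(X ∪ Y) : Set α) \ P) ⊆ ((↑X \ (P ∪ ↑Y)) ∪ (↑Y \ P)) := by
          intro x hx
          simp only [Finset.coe_union, Set.mem_diff, Set.mem_union, Finset.mem_coe] at hx ⊢
          tauto
        have h1 : (((↑X \ (P ∪ ↑Y)) ∪ (↑Y \ P)) : Set α).Finite := by
          apply Set.Finite.union <;>
            exact Set.Finite.subset (Finset.finite_toSet _) Set.diff_subset
        exact (Set.ncard_le_ncard hss h1).trans (Set.ncard_union_le _ _)
      have hsplit' : (((↑(X ∪ Y) : Set α) \ P).ncard : ℤ) ≤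
          (((↑X : Set α) \ (P ∪ ↑Y)).ncard : ℤ) + (((↑Y : Set α) \ P).ncard : ℤ) := by
        exact_mod_cast hsplit
      rw [hcard] at happ
      push_cast at happ
      rw [hF2card] at happ
      have hY' : ((↑Y \ P : Set α).ncard : ℤ) ≤ (S2.ncard : ℤ) := hY
      linarith
    · intro e he
      rcases Finset.mem_union.mp he with h | h
      · obtain ⟨h1, h2, h3⟩ := hEs e h
        refine ⟨h1, ?_, fun hc => h3 (hc.trans Set.subset_union_left)⟩
        intro x hx
        rcases h2 hx with hx' | hx'
        · exact Or.inl (by simp [Finset.mem_coe.mp hx'])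
        · rcases hx' with hx' | hx'
          · exact Or.inr hx'
          · exact Or.inl (by simp [Finset.mem_coe.mp hx'])
      · have h2 : e ∈ S2 := by rwa [Set.Finite.mem_toFinset] at h
        refine ⟨h2.1, ?_, h2.2.2⟩
        refine h2.2.1.trans ?_
        intro x hx
        exact Or.inl (by simp [Finset.mem_coe.mp hx])
  · -- edges split
    ext e
    simp only [Hypergraph'.edgesIn, Set.mem_setOf_eq, Set.mem_union]
    constructor
    · rintro ⟨h1, h2⟩
      by_cases hc : (↑e : Set α) ⊆ P
      · exact Or.inl ⟨h1, hc⟩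
      · refine Or.inr ⟨h1, key e h1 ?_ hc⟩
        rwa [Set.union_comm] at h2
    · rintro (⟨h1, h2⟩ | ⟨h1, h2⟩)
      · exact ⟨h1, h2.trans Set.subset_union_left⟩
      · exact ⟨h1, h2.trans Set.subset_union_right⟩

/-- Enlarging the base set preserves the deficiency hypothesis. -/
lemma aux_shift {P P' : Set α} (hP : A.SelfSuff P) (hPP' : P ⊆ P') (Y : Finset α)
    (hY : ((↑Y \ P : Set α).ncard : ℤ) ≤
      (({e | e ∈ A.edges ∧ ↑e ⊆ (↑Y : Set α) ∧ ¬ ↑e ⊆ P} : Set (Finset α)).ncard : ℤ)) :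
    ((↑Y \ P' : Set α).ncard : ℤ) ≤
      (({e | e ∈ A.edges ∧ ↑e ⊆ (↑Y : Set α) ∧ ¬ ↑e ⊆ P'} : Set (Finset α)).ncard : ℤ) := by
  classical
  set S : Set (Finset α) := {e | e ∈ A.edges ∧ ↑e ⊆ (↑Y : Set α) ∧ ¬ ↑e ⊆ P} with hSdef
  set S' : Set (Finset α) := {e | e ∈ A.edges ∧ ↑e ⊆ (↑Y : Set α) ∧ ¬ ↑e ⊆ P'} with hS'def
  have hS'sub : S' ⊆ S := fun e he => ⟨he.1, he.2.1, fun hc => he.2.2 (hc.trans hPP')⟩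
  have hSfin : S.Finite := by
    refine Set.Finite.subset (Y.powerset.finite_toSet) ?_
    intro e he
    simp only [Finset.coe_powerset, Set.mem_preimage, Set.mem_powerset_iff]
    exact he.2.1
  set D : Finset α := Y.filter (fun x => x ∈ P') with hD
  have hDcoe : (↑D : Set α) = ↑Y ∩ P' := by
    ext x; simp [hD]
  have hT : S \ S' ⊆ {e | e ∈ A.edges ∧ ↑e ⊆ (↑D : Set α) ∪ P ∧ ¬ ↑e ⊆ P} := by
    rintro e ⟨heS, heS'⟩
    have heP' : (↑e : Set α) ⊆ P' := by
      by_contra hc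
      exact heS' ⟨heS.1, heS.2.1, hc⟩
    refine ⟨heS.1, ?_, heS.2.2⟩
    intro x hx
    exact Or.inl (by rw [hDcoe]; exact ⟨heS.2.1 hx, heP' hx⟩)
  obtain ⟨hTfin, hTbound⟩ := aux_finite_bound A hP D
  have hTcard : (S \ S').ncard ≤ (↑D \ P : Set α).ncard :=
    (Set.ncard_le_ncard hT hTfin).trans hTbound
  have hDP : (↑D \ P : Set α) = ↑Y ∩ (P' \ P) := by
    rw [hDcoe]; ext x; simp only [Set.mem_diff, Set.mem_inter_iff]; tauto
  have hYsplit : (↑Y \ P : Set α).ncard = (↑Y \ P' : Set α).ncard + (↑Y ∩ (P' \ P) : Set α).ncard := by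
    have hu : (↑Y \ P : Set α) = (↑Y \ P') ∪ (↑Y ∩ (P' \ P)) := by
      ext x
      simp only [Set.mem_diff, Set.mem_union, Set.mem_inter_iff]
      constructor
      · rintro ⟨hx, hxP⟩
        by_cases hc : x ∈ P'
        · exact Or.inr ⟨hx, hc, hxP⟩
        · exact Or.inl ⟨hx, hc⟩
      · rintro (⟨hx, hxP'⟩ | ⟨hx, _, hxP⟩)
        · exact ⟨hx, fun hc => hxP' (hPP' hc)⟩
        · exact ⟨hx, hxP⟩
    rw [hu]
    refine Set.ncard_union_eq ?_ ?_ ?_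
    · rw [Set.disjoint_left]
      rintro x ⟨_, hxP'⟩ ⟨_, hxP'', _⟩
      exact hxP' hxP''
    · exact Set.Finite.subset (Finset.finite_toSet Y) Set.diff_subset
    · exact Set.Finite.subset (Finset.finite_toSet Y) Set.inter_subset_left
  have hSsplit : S.ncard = S'.ncard + (S \ S').ncard := by
    have hu : S = S' ∪ (S \ S') := (Set.union_diff_cancel hS'sub).symm
    nth_rewrite 1 [hu]
    exact Set.ncard_union_eq Set.disjoint_sdiff_right (hSfin.subset hS'sub) (hSfin.subset Set.diff_subset)
  have h1 : ((S \ S').ncard : ℤ) ≤ ((↑Y ∩ (P' \ P) : Set α).ncard : ℤ) := by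
    rw [← hDP]; exact_mod_cast hTcard
  have h2 : ((↑Y \ P : Set α).ncard : ℤ) =
      ((↑Y \ P' : Set α).ncard : ℤ) + ((↑Y ∩ (P' \ P) : Set α).ncard : ℤ) := by
    exact_mod_cast hYsplit
  have h3 : (S.ncard : ℤ) = (S'.ncard : ℤ) + ((S \ S').ncard : ℤ) := by exact_mod_cast hSsplit
  linarith

/-- The inductive workhorse. -/
lemma aux_main : ∀ (n : ℕ) (P : Set α), A.SelfSuff P → ∀ (Y : Fin n → Finset α),
    (∀ i, ((↑(Y i) \ P : Set α).ncard : ℤ) ≤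
      (({e | e ∈ A.edges ∧ ↑e ⊆ (↑(Y i) : Set α) ∧ ¬ ↑e ⊆ P} : Set (Finset α)).ncard : ℤ)) →
    A.SelfSuff (P ∪ ⋃ i, ↑(Y i)) ∧
      A.edgesIn (P ∪ ⋃ i, ↑(Y i)) = A.edgesIn P ∪ ⋃ i, A.edgesIn ↑(Y i) := by
  intro n
  induction n with
  | zero =>
    intro P hP Y _
    have h0 : (⋃ i : Fin 0, (↑(Y i) : Set α)) = ∅ := by simp
    have h1 : (⋃ i : Fin 0, A.edgesIn ↑(Y i)) = ∅ := by simp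
    rw [h0, h1, Set.union_empty, Set.union_empty]
    exact ⟨hP, rfl⟩
  | succ n ih =>
    intro P hP Y hY
    obtain ⟨hP', hedge0⟩ := aux_step A hP (Y 0) (hY 0)
    have hYs : ∀ i : Fin n, ((↑(Y i.succ) \ (P ∪ ↑(Y 0)) : Set α).ncard : ℤ) ≤
        (({e | e ∈ A.edges ∧ ↑e ⊆ (↑(Y i.succ) : Set α) ∧ ¬ ↑e ⊆ (P ∪ ↑(Y 0))} : Set (Finset α)).ncard : ℤ) :=
      fun i => aux_shift A hP Set.subset_union_left (Y i.succ) (hY i.succ)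
    obtain ⟨hSS, hE⟩ := ih (P ∪ ↑(Y 0)) hP' (fun i => Y i.succ) hYs
    have hunion : (P ∪ ↑(Y 0)) ∪ ⋃ i : Fin n, (↑(Y i.succ) : Set α) =
        P ∪ ⋃ i : Fin (n + 1), (↑(Y i) : Set α) := by
      ext x
      simp only [Set.mem_union, Set.mem_iUnion, Fin.exists_fin_succ]
      tauto
    rw [hunion] at hSS hE
    refine ⟨hSS, ?_⟩
    rw [hE, hedge0]
    ext e
    simp only [Set.mem_union, Set.mem_iUnion, Fin.exists_fin_succ]
    tauto

end Aux

/-- if `P ≤ A` and `δ(Yᵢ/Yᵢ ∩ P) ≤ 0` for each `i`, then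
`P ∪ ⋃ᵢ Yᵢ ≤ A` and the `Yᵢ` are freely joined over `P`:
`R[P ∪ ⋃ᵢ Yᵢ] = R[P] ∪ ⋃ᵢ R[Yᵢ]`. -/
theorem selfSuff_union_of_deltaRel_nonpos {α : Type*} [DecidableEq α]
    (A : Hypergraph' α) (hA : A.SelfSuff ∅) (P : Set α) (hP : A.SelfSuff P)
    (n : ℕ) (Y : Fin n → Finset α)
    (hY : ∀ i, A.deltaRel (Y i) (↑(Y i) ∩ P) ≤ 0) :
    A.SelfSuff (P ∪ ⋃ i, ↑(Y i)) ∧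
      A.edgesIn (P ∪ ⋃ i, ↑(Y i)) = A.edgesIn P ∪ ⋃ i, A.edgesIn ↑(Y i) := by
  apply aux_main A n P hP Y
  intro i
  have h := hY i
  unfold Hypergraph'.deltaRel at h
  have e1 : ((↑(Y i) : Set α) \ (↑(Y i) ∩ P)) = ↑(Y i) \ P := by
    ext x; simp only [Set.mem_diff, Set.mem_inter_iff]; tauto
  have e2 : {e | e ∈ A.edges ∧ ↑e ⊆ (↑(Y i) : Set α) ∪ (↑(Y i) ∩ P) ∧ ¬ ↑e ⊆ (↑(Y i) : Set α) ∩ P}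
      = {e | e ∈ A.edges ∧ ↑e ⊆ (↑(Y i) : Set α) ∧ ¬ ↑e ⊆ P} := by
    ext e
    simp only [Set.mem_setOf_eq]
    have hu : (↑(Y i) : Set α) ∪ (↑(Y i) ∩ P) = ↑(Y i) :=
      Set.union_eq_self_of_subset_right Set.inter_subset_left
    rw [hu]
    constructor
    · rintro ⟨h1, h2, h3⟩
      exact ⟨h1, h2, fun hc => h3 (Set.subset_inter h2 hc)⟩
    · rintro ⟨h1, h2, h3⟩
      exact ⟨h1, h2, fun hc => h3 (hc.trans Set.inter_subset_right)⟩
  rw [e1, e2] at h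
  linarith
end

section
/- Let A = (M,R) be a hypergraph with ∅ self-sufficient, G its associated pregeometry, and Σ = {E₁,...,E_k} a finite set of finite-dimensional closed sets in G. Then Δ_G(Σ) ≥ d_G(E₁ ∪ ... ∪ E_k); i.e., the pregeometry associated to a hypergraph is flat. -/
open scoped Classical

namespace HGFlat
open Hypergraph'


variable {α : Type*} [DecidableEq α] (A : Hypergraph' α)

lemma edgesIn_finite (P : Finset α) : (A.edgesIn ↑P).Finite := by
  apply Set.Finite.subset P.powerset.finite_toSet
  intro e he
  simp only [Finset.coe_powerset, Set.mem_preimage, Set.mem_powerset_iff]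
  exact he.2

lemma edgesIn_mono {P Q : Set α} (h : P ⊆ Q) : A.edgesIn P ⊆ A.edgesIn Q :=
  fun e he => ⟨he.1, he.2.trans h⟩

variable (hA : A.SelfSuff ∅)
include hA

lemma card_edges_le (P : Finset α) : ((A.edgesIn ↑P).ncard : ℤ) ≤ P.card := by
  have hfin := edgesIn_finite A P
  have h := hA P hfin.toFinset ?_
  · rw [Set.ncard_eq_toFinset_card _ hfin]
    simpa using h
  · intro e he
    rw [Set.Finite.mem_toFinset] at he
    refine ⟨he.1, by simpa using he.2, ?_⟩
    intro hc
    exact A.nonempty_edges e he.1 (by simpa using hc)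

lemma delta_nonneg (P : Finset α) : 0 ≤ A.delta P := by
  have := card_edges_le A hA P
  unfold Hypergraph'.delta
  omega

omit hA

lemma delta_submodular (U V : Finset α) :
    A.delta (U ∪ V) + A.delta (U ∩ V) ≤ A.delta U + A.delta V := by
  classical
  have hU := edgesIn_finite A U
  have hV := edgesIn_finite A V
  have hUV := edgesIn_finite A (U ∪ V)
  have hI : A.edgesIn ↑(U ∩ V) = A.edgesIn ↑U ∩ A.edgesIn ↑V := by
    ext e
    simp only [edgesIn, Set.mem_setOf_eq, Set.mem_inter_iff, Finset.coe_inter,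
      Set.subset_inter_iff]
    tauto
  have hsub : A.edgesIn ↑U ∪ A.edgesIn ↑V ⊆ A.edgesIn ↑(U ∪ V) := by
    rintro e (he | he)
    · exact ⟨he.1, he.2.trans (by simp [Finset.coe_union])⟩
    · exact ⟨he.1, he.2.trans (by simp [Finset.coe_union])⟩
  have hcard : (U ∪ V).card + (U ∩ V).card = U.card + V.card :=
    Finset.card_union_add_card_inter U V
  have e1 : (A.edgesIn ↑U ∪ A.edgesIn ↑V).ncard ≤ (A.edgesIn ↑(U ∪ V)).ncard :=
    Set.ncard_le_ncard hsub hUV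
  have e2 : (A.edgesIn ↑U ∪ A.edgesIn ↑V).ncard + (A.edgesIn ↑U ∩ A.edgesIn ↑V).ncard
      = (A.edgesIn ↑U).ncard + (A.edgesIn ↑V).ncard := by
    rw [Set.ncard_union_add_ncard_inter _ _ hU hV]
  have e3 : A.edgesIn ↑(U ∪ V) = A.edgesIn (↑U ∪ ↑V) := by rw [Finset.coe_union]
  have hcard' : ((U ∪ V).card : ℤ) + (U ∩ V).card = U.card + V.card := by exact_mod_cast hcard
  unfold Hypergraph'.delta
  rw [hI, e3]
  have e2' : ((A.edgesIn ↑U ∪ A.edgesIn ↑V).ncard : ℤ) + (A.edgesIn ↑U ∩ A.edgesIn ↑V).ncard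
      = (A.edgesIn ↑U).ncard + (A.edgesIn ↑V).ncard := by exact_mod_cast e2
  have e1' : ((A.edgesIn ↑U ∪ A.edgesIn ↑V).ncard : ℤ) ≤ (A.edgesIn (↑U ∪ ↑V)).ncard := by
    exact_mod_cast (e3 ▸ e1)
  omega

lemma hdim_set_nonempty (X : Finset α) :
    {d : ℤ | ∃ B : Finset α, X ⊆ B ∧ d = A.delta B}.Nonempty :=
  ⟨A.delta X, X, subset_rfl, rfl⟩

include hA

lemma hdim_set_bdd (X : Finset α) :
    BddBelow {d : ℤ | ∃ B : Finset α, X ⊆ B ∧ d = A.delta B} := by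
  refine ⟨0, ?_⟩
  rintro d ⟨B, _, rfl⟩
  exact delta_nonneg A hA B

lemma hdim_le {X B : Finset α} (h : X ⊆ B) : A.hdim X ≤ A.delta B :=
  csInf_le (hdim_set_bdd A hA X) ⟨B, h, rfl⟩

lemma hdim_spec (X : Finset α) : ∃ B : Finset α, X ⊆ B ∧ A.delta B = A.hdim X := by
  have := Int.csInf_mem (hdim_set_nonempty A X) (hdim_set_bdd A hA X)
  obtain ⟨B, hB, hd⟩ := this
  exact ⟨B, hB, hd.symm⟩

lemma hdim_nonneg (X : Finset α) : 0 ≤ A.hdim X := by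
  obtain ⟨B, _, hB⟩ := hdim_spec A hA X
  rw [← hB]; exact delta_nonneg A hA B

lemma hdim_mono {X Y : Finset α} (h : X ⊆ Y) : A.hdim X ≤ A.hdim Y := by
  obtain ⟨B, hYB, hB⟩ := hdim_spec A hA Y
  rw [← hB]
  exact hdim_le A hA (h.trans hYB)

/-- self-sufficiency of a finite set -/
def SS (B : Finset α) : Prop := ∀ C : Finset α, B ⊆ C → A.delta B ≤ A.delta C

lemma SS_hdim {B : Finset α} (h : SS A B) : A.hdim B = A.delta B := by
  apply le_antisymm (hdim_le A hA subset_rfl)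
  · apply le_csInf (hdim_set_nonempty A B)
    rintro d ⟨C, hC, rfl⟩
    exact h C hC

lemma SS_of_min {X B : Finset α} (hXB : X ⊆ B) (h : A.delta B = A.hdim X) : SS A B := by
  intro C hC
  rw [h]
  exact hdim_le A hA (hXB.trans hC)

omit hA in
lemma SS_inter_le {V : Finset α} (hV : SS A V) (W : Finset α) :
    A.delta (W ∩ V) ≤ A.delta W := by
  have h1 := delta_submodular A W V
  have h2 := hV (W ∪ V) Finset.subset_union_right
  omega


omit hA

lemma cl_mono (G : Pregeometry α) {Y Z : Set α} (h : Y ⊆ Z) : G.cl Y ⊆ G.cl Z := by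
  rintro x ⟨B, hB, hd⟩; exact ⟨B, hB.trans h, hd⟩

include hA

variable (G : Pregeometry α)

lemma mem_cl_of_hdim (hrep : A.Represents G) {x : α} {X : Finset α}
    (h : A.hdim (insert x X) ≤ A.hdim X) : x ∈ G.cl ↑X := by
  refine ⟨X, subset_rfl, ?_⟩
  have h1 : A.hdim X ≤ A.hdim (insert x X) :=
    hdim_mono A hA (Finset.subset_insert x X)
  have h2 : (G.dim (insert x X) : ℤ) = G.dim X := by
    rw [hrep _, hrep _]; omega
  exact_mod_cast h2

noncomputable def css (X : Finset α) : Finset α := (hdim_spec A hA X).choose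

lemma css_subset (X : Finset α) : X ⊆ css A hA X := (hdim_spec A hA X).choose_spec.1

lemma css_delta (X : Finset α) : A.delta (css A hA X) = A.hdim X :=
  (hdim_spec A hA X).choose_spec.2

lemma css_SS (X : Finset α) : SS A (css A hA X) :=
  SS_of_min A hA (css_subset A hA X) (css_delta A hA X)

lemma css_subset_cl (hrep : A.Represents G) (X : Finset α) :
    ↑(css A hA X) ⊆ G.cl ↑X := by
  intro b hb
  apply mem_cl_of_hdim A hA G hrep
  have h1 : insert b X ⊆ css A hA X := by
    apply Finset.insert_subset hb (css_subset A hA X)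
  calc A.hdim (insert b X) ≤ A.delta (css A hA X) := hdim_le A hA h1
    _ = A.hdim X := css_delta A hA X

lemma css_subset_closed (hrep : A.Represents G) {X : Finset α} {E : Set α}
    (hE : G.cl E ⊆ E) (hXE : ↑X ⊆ E) : ↑(css A hA X) ⊆ E :=
  (css_subset_cl A hA G hrep X).trans ((cl_mono G hXE).trans hE)

omit hA

lemma edim_mono {Y Z : Set α} (h : Y ⊆ Z) : G.edim Y ≤ G.edim Z := by
  apply iSup₂_le
  intro B hB
  exact le_iSup₂ (f := fun (B : Finset α) (_ : ↑B ⊆ Z) => ((G.dim B : ℕ∞))) B (hB.trans h)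

lemma dim_le_edim {Y : Set α} {B : Finset α} (hB : ↑B ⊆ Y) :
    (G.dim B : ℕ∞) ≤ G.edim Y :=
  le_iSup₂ (f := fun (B : Finset α) (_ : ↑B ⊆ Y) => ((G.dim B : ℕ∞))) B hB

lemma dim_le_sdim {Y : Set α} (hY : G.edim Y ≠ ⊤) {B : Finset α} (hB : ↑B ⊆ Y) :
    G.dim B ≤ G.sdim Y := by
  have h1 := dim_le_edim G hB
  have := ENat.toNat_le_toNat h1 hY
  simpa [Pregeometry.sdim] using this

lemma sdim_le_of_forall {Y : Set α} {m : ℕ} (h : ∀ B : Finset α, ↑B ⊆ Y → G.dim B ≤ m) :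
    G.sdim Y ≤ m := by
  have h1 : G.edim Y ≤ (m : ℕ∞) := by
    apply iSup₂_le
    intro B hB
    exact_mod_cast h B hB
  have := ENat.toNat_le_toNat h1 (by simp)
  simpa [Pregeometry.sdim] using this

lemma exists_spanning {Y : Set α} (hY : G.edim Y ≠ ⊤) :
    ∃ Xf : Finset α, ↑Xf ⊆ Y ∧ G.dim Xf = G.sdim Y := by
  classical
  set N : Set ℕ := {n | ∃ B : Finset α, ↑B ⊆ Y ∧ G.dim B = n} with hN
  have hne : N.Nonempty := ⟨G.dim ∅, ∅, by simp, rfl⟩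
  have hbdd : BddAbove N := by
    refine ⟨G.sdim Y, ?_⟩
    rintro n ⟨B, hB, rfl⟩
    exact dim_le_sdim G hY hB
  obtain ⟨Xf, hXf, hdim⟩ := Nat.sSup_mem hne hbdd
  refine ⟨Xf, hXf, le_antisymm (dim_le_sdim G hY hXf) ?_⟩
  have h2 : G.edim Y ≤ (G.dim Xf : ℕ∞) := by
    apply iSup₂_le
    intro B hB
    have : G.dim B ≤ G.dim Xf := by
      rw [hdim]
      exact le_csSup hbdd ⟨B, hB, rfl⟩
    exact_mod_cast this
  have := ENat.toNat_le_toNat h2 (by simp)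
  simpa [Pregeometry.sdim] using this

include hA

noncomputable def Yrec (base : Finset (Set α) → Finset α) (Sig : Finset (Set α))
    (s : Finset (Set α)) : Finset α :=
  css A hA (base s ∪ (Sig.powerset.filter (fun t => s ⊂ t)).attach.sup
    (fun t => Yrec base Sig t.1))
termination_by Sig.card - s.card
decreasing_by
  have h := t.2
  simp only [Finset.mem_filter, Finset.mem_powerset] at h
  have h1 := Finset.card_le_card h.1
  have h2 := Finset.card_lt_card h.2
  omega

lemma Yrec_eq (base : Finset (Set α) → Finset α) (Sig s : Finset (Set α)) :
    Yrec A hA base Sig s = css A hA (base s ∪ (Sig.powerset.filter (fun t => s ⊂ t)).attach.sup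
      (fun t => Yrec A hA base Sig t.1)) := by
  rw [Yrec]

lemma base_subset_Yrec (base : Finset (Set α) → Finset α) (Sig s : Finset (Set α)) :
    base s ⊆ Yrec A hA base Sig s := by
  rw [Yrec_eq]
  exact Finset.subset_union_left.trans (css_subset A hA _)

lemma Yrec_anti (base : Finset (Set α) → Finset α) (Sig : Finset (Set α)) {s t : Finset (Set α)}
    (hts : s ⊂ t) (htS : t ⊆ Sig) : Yrec A hA base Sig t ⊆ Yrec A hA base Sig s := by
  rw [Yrec_eq A hA base Sig s]
  refine subset_trans ?_ ((Finset.subset_union_right).trans (css_subset A hA _))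
  have hmem : t ∈ Sig.powerset.filter (fun t => s ⊂ t) := by
    simp [Finset.mem_filter, Finset.mem_powerset, hts, htS]
  exact Finset.le_sup (f := fun (t : {x // x ∈ Sig.powerset.filter (fun t => s ⊂ t)}) =>
    Yrec A hA base Sig t.1) (Finset.mem_attach _ ⟨t, hmem⟩)

lemma Yrec_SS (base : Finset (Set α) → Finset α) (Sig s : Finset (Set α)) :
    SS A (Yrec A hA base Sig s) := by
  rw [Yrec_eq]; exact css_SS A hA _

lemma Yrec_delta_hdim (base : Finset (Set α) → Finset α) (Sig s : Finset (Set α)) :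
    A.delta (Yrec A hA base Sig s) =
      A.hdim (base s ∪ (Sig.powerset.filter (fun t => s ⊂ t)).attach.sup
        (fun t => Yrec A hA base Sig t.1)) := by
  rw [Yrec_eq]; exact css_delta A hA _

variable (hrep : A.Represents G)
include hrep

lemma Yrec_subset (base : Finset (Set α) → Finset α) (Sig : Finset (Set α))
    (hcl : ∀ t, t ⊆ Sig → t.Nonempty → G.cl (⋂₀ ↑t) ⊆ ⋂₀ ↑t)
    (hbase : ∀ t, t ⊆ Sig → t.Nonempty → ↑(base t) ⊆ ⋂₀ (↑t : Set (Set α))) :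
    ∀ n s, s ⊆ Sig → s.Nonempty → Sig.card - s.card ≤ n →
      ↑(Yrec A hA base Sig s) ⊆ ⋂₀ (↑s : Set (Set α)) := by
  intro n
  induction n using Nat.strong_induction_on with
  | _ n ih =>
    intro s hsSig hsne hcard
    rw [Yrec_eq]
    apply css_subset_closed A hA G hrep (hcl s hsSig hsne)
    rw [Finset.coe_union]
    apply Set.union_subset (hbase s hsSig hsne)
    intro x hx
    rw [Finset.mem_coe] at hx
    obtain ⟨t, -, hxt⟩ := Finset.mem_sup.mp hx
    have ht := t.2
    simp only [Finset.mem_filter, Finset.mem_powerset] at ht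
    have h1 := Finset.card_le_card ht.1
    have h2 := Finset.card_lt_card ht.2
    have hlt : Sig.card - t.1.card < n := by omega
    have hsub := ih _ hlt t.1 ht.1 (hsne.mono ht.2.subset) le_rfl
    have hmono : ⋂₀ (↑t.1 : Set (Set α)) ⊆ ⋂₀ (↑s : Set (Set α)) :=
      Set.sInter_subset_sInter (by exact_mod_cast ht.2.subset)
    exact hmono (hsub hxt)

lemma Yrec_delta (base : Finset (Set α) → Finset α) (Sig : Finset (Set α))
    (hcl : ∀ t, t ⊆ Sig → t.Nonempty → G.cl (⋂₀ ↑t) ⊆ ⋂₀ ↑t)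
    (hbase : ∀ t, t ⊆ Sig → t.Nonempty → ↑(base t) ⊆ ⋂₀ (↑t : Set (Set α)))
    (hlow : ∀ t, t ⊆ Sig → t.Nonempty → (G.sdim (⋂₀ ↑t) : ℤ) ≤ A.hdim (base t))
    (hfin : ∀ t, t ⊆ Sig → t.Nonempty → G.edim (⋂₀ (↑t : Set (Set α))) ≠ ⊤)
    (s : Finset (Set α)) (hsSig : s ⊆ Sig) (hsne : s.Nonempty) :
    A.delta (Yrec A hA base Sig s) = (G.sdim (⋂₀ (↑s : Set (Set α))) : ℤ) := by
  apply le_antisymm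
  · have h1 : A.delta (Yrec A hA base Sig s) = A.hdim (Yrec A hA base Sig s) :=
      (SS_hdim A hA (Yrec_SS A hA base Sig s)).symm
    rw [h1, ← hrep]
    have h2 : ↑(Yrec A hA base Sig s) ⊆ ⋂₀ (↑s : Set (Set α)) :=
      Yrec_subset A hA G hrep base Sig hcl hbase _ s hsSig hsne le_rfl
    exact_mod_cast dim_le_sdim G (hfin s hsSig hsne) h2
  · rw [Yrec_delta_hdim]
    calc (G.sdim (⋂₀ (↑s : Set (Set α))) : ℤ) ≤ A.hdim (base s) := hlow s hsSig hsne
      _ ≤ _ := hdim_mono A hA Finset.subset_union_left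

omit hA hrep

lemma IE_inner (T : Finset (Set α)) :
    ∑ S ∈ T.powerset.filter (fun S => S ≠ ∅), (-1:ℤ)^(S.card+1)
      = if T = ∅ then 0 else 1 := by
  have h1 : T.powerset.filter (fun S => S ≠ ∅) = T.powerset.erase ∅ :=
    Finset.filter_ne' _ _
  have h2 := Finset.add_sum_erase T.powerset (fun S => (-1:ℤ)^(S.card+1))
    (Finset.empty_mem_powerset T)
  have h3 : ∑ S ∈ T.powerset, (-1:ℤ)^(S.card+1) = -(if T = ∅ then 1 else 0) := by
    have h4 : ∀ S : Finset (Set α), (-1:ℤ)^(S.card+1) = (-1) * (-1:ℤ)^(S.card) := by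
      intro S; rw [pow_succ]; ring
    simp_rw [h4]
    rw [← Finset.mul_sum, Finset.sum_powerset_neg_one_pow_card]
    ring
  rw [h1]
  have hb : ((-1:ℤ))^((∅:Finset (Set α)).card+1) + ∑ S ∈ T.powerset.erase ∅, (-1:ℤ)^(S.card+1)
      = ∑ S ∈ T.powerset, (-1:ℤ)^(S.card+1) := h2
  rw [h3] at hb
  simp only [Finset.card_empty, zero_add, pow_one] at hb
  split_ifs at hb ⊢ <;> omega

variable {β : Type*}

lemma IE_core (Sig : Finset (Set α)) (F : Finset β) (t : β → Finset (Set α))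
    (ht : ∀ o ∈ F, t o ⊆ Sig) :
    ∑ S ∈ Sig.powerset.filter (fun S => S ≠ ∅),
        (-1:ℤ)^(S.card+1) * ((F.filter (fun o => S ⊆ t o)).card : ℤ)
      = ((F.filter (fun o => t o ≠ ∅)).card : ℤ) := by
  have step1 : ∀ S : Finset (Set α),
      ((F.filter (fun o => S ⊆ t o)).card : ℤ) = ∑ o ∈ F, if S ⊆ t o then (1:ℤ) else 0 :=
    fun S => (Finset.sum_boole _ _).symm
  simp_rw [step1, Finset.mul_sum]
  rw [Finset.sum_comm]
  rw [← Finset.sum_boole (fun o => t o ≠ ∅) F]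
  apply Finset.sum_congr rfl
  intro o ho
  have e1 : ∀ S : Finset (Set α), (-1:ℤ)^(S.card+1) * (if S ⊆ t o then (1:ℤ) else 0)
      = if S ⊆ t o then (-1:ℤ)^(S.card+1) else 0 := by
    intro S; split_ifs <;> ring
  simp_rw [e1]
  rw [← Finset.sum_filter]
  have e2 : (Sig.powerset.filter (fun S => S ≠ ∅)).filter (fun S => S ⊆ t o)
      = (t o).powerset.filter (fun S => S ≠ ∅) := by
    ext S
    simp only [Finset.mem_filter, Finset.mem_powerset]
    constructor
    · rintro ⟨⟨-, h2⟩, h3⟩; exact ⟨h3, h2⟩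
    · rintro ⟨h1, h2⟩; exact ⟨⟨h1.trans (ht o ho), h2⟩, h1⟩
  rw [e2, IE_inner]
  split_ifs with h1 h2 <;> simp_all

lemma delta_IE (Sig : Finset (Set α)) (Y : Set α → Finset α) :
    A.delta (Sig.sup Y) ≤ ∑ S ∈ Sig.powerset.filter (fun S => S ≠ ∅),
      (-1:ℤ)^(S.card+1) * A.delta ((Sig.sup Y).filter (fun x => ∀ E ∈ S, x ∈ Y E)) := by
  classical
  set F : Finset α := Sig.sup Y with hF
  -- vertex part
  have hv : ∑ S ∈ Sig.powerset.filter (fun S => S ≠ ∅),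
      (-1:ℤ)^(S.card+1) * ((F.filter (fun x => ∀ E ∈ S, x ∈ Y E)).card : ℤ)
      = (F.card : ℤ) := by
    have h1 : ∀ S ∈ Sig.powerset.filter (fun S => S ≠ ∅),
        F.filter (fun x => ∀ E ∈ S, x ∈ Y E)
          = F.filter (fun x => S ⊆ Sig.filter (fun E => x ∈ Y E)) := by
      intro S hS
      simp only [Finset.mem_filter, Finset.mem_powerset] at hS
      apply Finset.filter_congr
      intro x _
      simp only [Finset.subset_iff, Finset.mem_filter]
      exact ⟨fun h E hE => ⟨hS.1 hE, h E hE⟩, fun h E hE => (h hE).2⟩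
    rw [Finset.sum_congr rfl (fun S hS => by rw [h1 S hS])]
    rw [IE_core Sig F (fun x => Sig.filter (fun E => x ∈ Y E))
      (fun o _ => Finset.filter_subset _ _)]
    have heq : F.filter (fun o => Sig.filter (fun E => o ∈ Y E) ≠ ∅) = F := by
      apply Finset.filter_true_of_mem
      intro x hx
      obtain ⟨E, hE, hxE⟩ := Finset.mem_sup.mp hx
      intro hc
      have : E ∈ Sig.filter (fun E => x ∈ Y E) := Finset.mem_filter.mpr ⟨hE, hxE⟩
      simp [hc] at this
    rw [heq]
  -- edge part
  have hFe := edgesIn_finite A F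
  set Fe : Finset (Finset α) := hFe.toFinset with hFedef
  have he : ∑ S ∈ Sig.powerset.filter (fun S => S ≠ ∅),
      (-1:ℤ)^(S.card+1) *
        ((A.edgesIn ↑(F.filter (fun x => ∀ E ∈ S, x ∈ Y E))).ncard : ℤ)
      ≤ ((A.edgesIn ↑F).ncard : ℤ) := by
    have h1 : ∀ S ∈ Sig.powerset.filter (fun S => S ≠ ∅),
        ((A.edgesIn ↑(F.filter (fun x => ∀ E ∈ S, x ∈ Y E))).ncard : ℤ)
          = ((Fe.filter (fun e => S ⊆ Sig.filter (fun E => e ⊆ Y E))).card : ℤ) := by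
      intro S hS
      simp only [Finset.mem_filter, Finset.mem_powerset] at hS
      congr 1
      have hfin2 : (A.edgesIn ↑(F.filter (fun x => ∀ E ∈ S, x ∈ Y E))).Finite :=
        edgesIn_finite A _
      rw [Set.ncard_eq_toFinset_card _ hfin2]
      congr 1
      ext e
      simp only [Set.Finite.mem_toFinset, Finset.mem_filter, hFedef, Set.Finite.mem_toFinset]
      constructor
      · rintro ⟨he1, he2⟩
        have hesub : ↑e ⊆ (F : Set α) := by
          intro x hx
          have := he2 hx
          simp only [Finset.coe_filter, Set.mem_setOf_eq] at this
          exact this.1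
        refine ⟨⟨he1, hesub⟩, ?_⟩
        intro E hES
        simp only [Finset.mem_filter]
        refine ⟨hS.1 hES, ?_⟩
        intro x hx
        have := he2 hx
        simp only [Finset.coe_filter, Set.mem_setOf_eq] at this
        exact this.2 E hES
      · rintro ⟨⟨he1, he2⟩, he3⟩
        refine ⟨he1, ?_⟩
        intro x hx
        simp only [Finset.coe_filter, Set.mem_setOf_eq]
        refine ⟨he2 hx, ?_⟩
        intro E hES
        have := he3 hES
        simp only [Finset.mem_filter] at this
        exact this.2 hx
    rw [Finset.sum_congr rfl (fun S hS => by rw [h1 S hS])]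
    rw [IE_core Sig Fe (fun e => Sig.filter (fun E => e ⊆ Y E))
      (fun o _ => Finset.filter_subset _ _)]
    have : (A.edgesIn ↑F).ncard = Fe.card := Set.ncard_eq_toFinset_card _ hFe
    rw [this]
    exact_mod_cast Finset.card_le_card (Finset.filter_subset _ _)
  -- combine
  unfold Hypergraph'.delta
  have expand : ∑ S ∈ Sig.powerset.filter (fun S => S ≠ ∅),
      (-1:ℤ)^(S.card+1) *
        (((F.filter (fun x => ∀ E ∈ S, x ∈ Y E)).card : ℤ)
          - ((A.edgesIn ↑(F.filter (fun x => ∀ E ∈ S, x ∈ Y E))).ncard : ℤ))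
      = ∑ S ∈ Sig.powerset.filter (fun S => S ≠ ∅),
        (-1:ℤ)^(S.card+1) * ((F.filter (fun x => ∀ E ∈ S, x ∈ Y E)).card : ℤ)
      - ∑ S ∈ Sig.powerset.filter (fun S => S ≠ ∅),
        (-1:ℤ)^(S.card+1) *
          ((A.edgesIn ↑(F.filter (fun x => ∀ E ∈ S, x ∈ Y E))).ncard : ℤ) := by
    rw [← Finset.sum_sub_distrib]
    apply Finset.sum_congr rfl
    intro S _
    ring
  rw [expand, hv]
  omega

lemma delta_inter_inf'_le (Y : Set α → Finset α) (Sig : Finset (Set α))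
    (hY : ∀ E ∈ Sig, SS A (Y E)) (S : Finset (Set α)) (hne : S.Nonempty) (hS : S ⊆ Sig)
    (W : Finset α) : A.delta (W ∩ S.inf' hne Y) ≤ A.delta W := by
  induction hne using Finset.Nonempty.cons_induction generalizing W with
  | singleton E =>
    rw [Finset.inf'_singleton]
    exact SS_inter_le A (hY E (by simpa using hS)) W
  | cons E S hES hne ih =>
    have hE : E ∈ Sig := hS (Finset.mem_cons_self E S)
    have hS' : S ⊆ Sig := (Finset.subset_cons hES).trans hS
    rw [Finset.inf'_cons hne]
    have h1 : W ∩ (Y E ⊓ S.inf' hne Y) = (W ∩ Y E) ∩ S.inf' hne Y := by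
      rw [Finset.inf_eq_inter, Finset.inter_assoc]
    rw [h1]
    exact (ih hS' (W ∩ Y E)).trans (SS_inter_le A (hY E hE) W)

lemma SS_inf' (Y : Set α → Finset α) (Sig : Finset (Set α))
    (hY : ∀ E ∈ Sig, SS A (Y E)) (S : Finset (Set α)) (hne : S.Nonempty) (hS : S ⊆ Sig) :
    SS A (S.inf' hne Y) := by
  intro C hC
  have h := delta_inter_inf'_le A Y Sig hY S hne hS C
  rwa [Finset.inter_eq_right.mpr hC] at h

end HGFlat

/-- the pregeometry associated to a hypergraph with `∅`
self-sufficient is flat: `Δ_G(Σ) ≥ d_G(⋃ Σ)` for every finite collection `Σ`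
of finite-dimensional closed sets. -/
theorem hypergraph_pregeometry_flat {α : Type*} [DecidableEq α]
    (A : Hypergraph' α) (hA : A.SelfSuff ∅) (G : Pregeometry α)
    (hrep : A.Represents G) : G.FlatIn Set.univ := by
  classical
  intro Sig hclosed hfin
  suffices key : ∀ B : Finset α, ↑B ⊆ ⋃₀ (↑Sig : Set (Set α)) → (G.dim B : ℤ) ≤ G.flatSum Sig by
    have h0 : (0:ℤ) ≤ G.flatSum Sig := by
      have := key ∅ (by simp)
      rw [G.dim_empty] at this
      exact_mod_cast this
    have hmeq : ((G.flatSum Sig).toNat : ℤ) = G.flatSum Sig := Int.toNat_of_nonneg h0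
    have hsd : G.sdim (⋃₀ (↑Sig : Set (Set α))) ≤ (G.flatSum Sig).toNat := by
      apply HGFlat.sdim_le_of_forall G
      intro C hC
      have := key C hC
      omega
    calc (G.sdim (⋃₀ (↑Sig : Set (Set α))) : ℤ) ≤ ((G.flatSum Sig).toNat : ℤ) := by
          exact_mod_cast hsd
      _ = G.flatSum Sig := hmeq
  intro B hB
  -- closedness of nonempty intersections
  have hclS : ∀ t : Finset (Set α), t ⊆ Sig → t.Nonempty →
      G.cl (⋂₀ ↑t) ⊆ ⋂₀ (↑t : Set (Set α)) := by
    intro t htS hne x hx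
    rw [Set.mem_sInter]
    intro E hEt
    have hE : E ∈ Sig := htS (by exact_mod_cast hEt)
    have hcl := (hclosed E hE).2
    rw [Set.inter_univ] at hcl
    have hsub : ⋂₀ (↑t : Set (Set α)) ⊆ E := Set.sInter_subset_of_mem hEt
    have := HGFlat.cl_mono G hsub hx
    rw [hcl] at this
    exact this
  -- finite-dimensionality of nonempty intersections
  have hfinS : ∀ t : Finset (Set α), t ⊆ Sig → t.Nonempty →
      G.edim (⋂₀ (↑t : Set (Set α))) ≠ ⊤ := by
    rintro t htS ⟨E0, hE0⟩ hc
    have hsub : ⋂₀ (↑t : Set (Set α)) ⊆ E0 :=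
      Set.sInter_subset_of_mem (by exact_mod_cast hE0)
    have hmono := HGFlat.edim_mono G hsub
    rw [hc] at hmono
    exact hfin E0 (htS hE0) (top_le_iff.mp hmono)
  -- the base sets
  set base : Finset (Set α) → Finset α := fun t =>
    (if h : t ⊆ Sig ∧ t.Nonempty then (HGFlat.exists_spanning G (hfinS t h.1 h.2)).choose else ∅)
      ∪ B.filter (fun x => ∀ E ∈ t, x ∈ E) with hbasedef
  have hbase : ∀ t, t ⊆ Sig → t.Nonempty → ↑(base t) ⊆ ⋂₀ (↑t : Set (Set α)) := by
    intro t h1 h2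
    rw [hbasedef]
    simp only [Finset.coe_union]
    apply Set.union_subset
    · rw [dif_pos ⟨h1, h2⟩]
      have hsp := (HGFlat.exists_spanning G (hfinS t h1 h2)).choose_spec
      exact hsp.1
    · intro x hx
      simp only [Finset.coe_filter, Set.mem_setOf_eq] at hx
      rw [Set.mem_sInter]
      intro E hEt
      exact hx.2 E (by exact_mod_cast hEt)
  have hlow : ∀ t, t ⊆ Sig → t.Nonempty →
      (G.sdim (⋂₀ (↑t : Set (Set α))) : ℤ) ≤ A.hdim (base t) := by
    intro t h1 h2
    have hsp := (HGFlat.exists_spanning G (hfinS t h1 h2)).choose_spec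
    calc (G.sdim (⋂₀ (↑t : Set (Set α))) : ℤ)
        = (G.dim (HGFlat.exists_spanning G (hfinS t h1 h2)).choose : ℤ) := by
          exact_mod_cast hsp.2.symm
      _ = A.hdim (HGFlat.exists_spanning G (hfinS t h1 h2)).choose := hrep _
      _ ≤ A.hdim (base t) := by
          apply HGFlat.hdim_mono A hA
          rw [hbasedef]
          beta_reduce
          rw [dif_pos ⟨h1, h2⟩]
          exact Finset.subset_union_left
  -- the self-sufficient sets
  set Y : Set α → Finset α := fun E => HGFlat.Yrec A hA base Sig {E} with hYdef
  have hYSS : ∀ E ∈ Sig, HGFlat.SS A (Y E) := fun E _ => HGFlat.Yrec_SS A hA base Sig {E}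
  have hBsub : B ⊆ Sig.sup Y := by
    intro x hx
    obtain ⟨E, hE, hxE⟩ := hB hx
    apply Finset.mem_sup.mpr
    refine ⟨E, by exact_mod_cast hE, ?_⟩
    apply HGFlat.base_subset_Yrec A hA base Sig {E}
    rw [hbasedef]
    apply Finset.mem_union_right
    rw [Finset.mem_filter]
    exact ⟨hx, by simpa using hxE⟩
  -- the main chain
  have hc1 : (G.dim B : ℤ) ≤ A.delta (Sig.sup Y) := by
    rw [hrep]
    calc A.hdim B ≤ A.hdim (Sig.sup Y) := HGFlat.hdim_mono A hA hBsub
      _ ≤ A.delta (Sig.sup Y) := HGFlat.hdim_le A hA subset_rfl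
  have hc2 := HGFlat.delta_IE A Sig Y
  have hterm : ∀ S ∈ Sig.powerset.filter (fun S => S ≠ ∅),
      A.delta ((Sig.sup Y).filter (fun x => ∀ E ∈ S, x ∈ Y E))
        = (G.sdim (⋂₀ (↑S : Set (Set α))) : ℤ) := by
    intro S hS
    simp only [Finset.mem_filter, Finset.mem_powerset] at hS
    obtain ⟨hSsub, hSne'⟩ := hS
    have hSne : S.Nonempty := Finset.nonempty_iff_ne_empty.mpr hSne'
    have hYE : ∀ E ∈ S, Y E ⊆ Sig.sup Y := fun E hE => Finset.le_sup (hSsub hE)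
    have hWeq : (Sig.sup Y).filter (fun x => ∀ E ∈ S, x ∈ Y E) = S.inf' hSne Y := by
      ext x
      rw [Finset.mem_filter, Finset.mem_inf']
      constructor
      · exact fun h => h.2
      · intro h
        obtain ⟨E0, hE0⟩ := hSne
        exact ⟨hYE E0 hE0 (h E0 hE0), h⟩
    rw [hWeq]
    have hWSS := HGFlat.SS_inf' A Y Sig hYSS S hSne hSsub
    have hYsing : ∀ E ∈ S, ↑(Y E) ⊆ E := by
      intro E hE
      have h1 : ↑(HGFlat.Yrec A hA base Sig {E}) ⊆ ⋂₀ (↑({E} : Finset (Set α)) : Set (Set α)) :=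
        HGFlat.Yrec_subset A hA G hrep base Sig hclS hbase _ {E}
          (Finset.singleton_subset_iff.mpr (hSsub hE)) (Finset.singleton_nonempty E) le_rfl
      simpa using h1
    have hsub2 : ↑(S.inf' hSne Y) ⊆ ⋂₀ (↑S : Set (Set α)) := by
      intro x hx
      rw [Finset.mem_coe, Finset.mem_inf'] at hx
      rw [Set.mem_sInter]
      intro E hE
      exact hYsing E (by exact_mod_cast hE) (hx E (by exact_mod_cast hE))
    have hsub1 : HGFlat.Yrec A hA base Sig S ⊆ S.inf' hSne Y := by
      intro x hx
      rw [Finset.mem_inf']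
      intro E hE
      rcases eq_or_ne ({E} : Finset (Set α)) S with heq | hne
      · show x ∈ HGFlat.Yrec A hA base Sig {E}
        rw [heq]
        exact hx
      · have hss : ({E} : Finset (Set α)) ⊂ S :=
          lt_of_le_of_ne (Finset.singleton_subset_iff.mpr hE) hne
        exact HGFlat.Yrec_anti A hA base Sig hss hSsub hx
    apply le_antisymm
    · have h1 : A.delta (S.inf' hSne Y) = A.hdim (S.inf' hSne Y) :=
        (HGFlat.SS_hdim A hA hWSS).symm
      rw [h1, ← hrep]
      exact_mod_cast HGFlat.dim_le_sdim G (hfinS S hSsub hSne) hsub2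
    · have h2 : A.delta (HGFlat.Yrec A hA base Sig S)
          = (G.sdim (⋂₀ (↑S : Set (Set α))) : ℤ) :=
        HGFlat.Yrec_delta A hA G hrep base Sig hclS hbase hlow hfinS S hSsub hSne
      calc (G.sdim (⋂₀ (↑S : Set (Set α))) : ℤ)
          = A.delta (HGFlat.Yrec A hA base Sig S) := h2.symm
        _ = A.hdim (HGFlat.Yrec A hA base Sig S) :=
            (HGFlat.SS_hdim A hA (HGFlat.Yrec_SS A hA base Sig S)).symm
        _ ≤ A.hdim (S.inf' hSne Y) := HGFlat.hdim_mono A hA hsub1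
        _ ≤ A.delta (S.inf' hSne Y) := HGFlat.hdim_le A hA subset_rfl
  have hsum : ∑ S ∈ Sig.powerset.filter (fun S => S ≠ ∅),
      (-1:ℤ)^(S.card+1) * A.delta ((Sig.sup Y).filter (fun x => ∀ E ∈ S, x ∈ Y E))
      = G.flatSum Sig := by
    unfold Pregeometry.flatSum
    apply Finset.sum_congr rfl
    intro S hS
    rw [hterm S hS]
  calc (G.dim B : ℤ) ≤ A.delta (Sig.sup Y) := hc1
    _ ≤ _ := hc2
    _ = G.flatSum Sig := hsum
end
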